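/- Let f be a continuous positive log-concave density on ℝ (i.e. log f is concave). If f is not integrable on (−∞, 0] and not integrable on [0, +∞), then f is constant; consequently, every bounded open interval is an isoperimetric region of its own weighted volume. -/

import Mathlib

open Filter MeasureTheory Set

/-- Weighted volume of a set `Ω ⊆ ℝ` with respect to the density `f`. -/
noncomputable def wvol (f : ℝ → ℝ) (Ω : Set ℝ) : ENNReal :=
  ∫⁻ x in Ω, ENNReal.ofReal (f x)

/-- Weighted perimeter of a set `Ω ⊆ ℝ`: the sum of `f` over the topological
boundary of `Ω`. -/
noncomputable def wper (f : ℝ → ℝ) (Ω : Set ℝ) : ENNReal :=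
  ∑' x : frontier Ω, ENNReal.ofReal (f x)

/-- `Ω` is an isoperimetric region (minimizer) of weighted volume `V` on the line. -/
def IsIsopRegion (f : ℝ → ℝ) (Ω : Set ℝ) (V : ENNReal) : Prop :=
  IsOpen Ω ∧ wvol f Ω = V ∧
    ∀ U : Set ℝ, IsOpen U → wvol f U = V → wper f Ω ≤ wper f U

/-- Integrability of an increasing exponential on a left half-line. -/
lemma exp_mul_integrableOn_Iic (a : ℝ) {s : ℝ} (hs : 0 < s) :
    IntegrableOn (fun x : ℝ => Real.exp (s * x)) (Set.Iic a) := by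
  have h := exp_neg_integrableOn_Ioi (-a) hs
  rw [← (Measure.measurePreserving_neg (volume : Measure ℝ)).integrableOn_comp_preimage
      (Homeomorph.neg ℝ).measurableEmbedding] at h
  simp only [Function.comp_def, neg_preimage, neg_Ioi, neg_neg, neg_mul, mul_neg] at h
  exact (integrableOn_Iic_iff_integrableOn_Iio).mpr h

/-- A continuous positive log-concave density which is not integrable on either
half-line is constant. -/
lemma aux_logconcave_const (f : ℝ → ℝ) (hcont : Continuous f) (hpos : ∀ x, 0 < f x)
    (hconc : ConcaveOn ℝ Set.univ (fun x => Real.log (f x)))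
    (h₁ : ¬ IntegrableOn f (Set.Iic 0))
    (h₂ : ¬ IntegrableOn f (Set.Ici 0)) : ∀ x y : ℝ, f x = f y := by
  set g : ℝ → ℝ := fun x => Real.log (f x) with hg
  have hfg : ∀ x, f x = Real.exp (g x) := fun x => (Real.exp_log (hpos x)).symm
  have key₁ : ∀ a b : ℝ, a < b → g a ≤ g b := by
    intro a b hab
    by_contra hlt
    push_neg at hlt
    set s : ℝ := (g b - g a) / (b - a) with hs
    have hsneg : s < 0 := div_neg_of_neg_of_pos (by linarith) (by linarith)
    apply h₂
    have hIcc : IntegrableOn f (Set.Icc 0 (max b 0)) := hcont.integrableOn_Icc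
    have hIoi : IntegrableOn f (Set.Ioi b) := by
      have hdom : IntegrableOn
          (fun x => Real.exp (g b - s * b) * Real.exp (-(-s) * x)) (Set.Ioi b) := by
        exact (exp_neg_integrableOn_Ioi b (neg_pos.mpr hsneg)).const_mul _
      apply hdom.mono' ((hcont.aestronglyMeasurable).restrict)
      filter_upwards [ae_restrict_mem measurableSet_Ioi] with x hx
      have hbx : b < x := hx
      have hslope := hconc.slope_anti_adjacent (mem_univ a) (mem_univ x) hab hbx
      -- (g x - g b) / (x - b) ≤ (g b - g a) / (b - a) = s
      have hgx : g x ≤ g b + s * (x - b) := by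
        have h' : (g x - g b) / (x - b) ≤ s := hslope
        have h'' : g x - g b ≤ s * (x - b) := by
          rw [div_le_iff₀ (by linarith)] at h'
          linarith
        linarith
      have : f x ≤ Real.exp (g b - s * b) * Real.exp (-(-s) * x) := by
        rw [hfg x, ← Real.exp_add]
        apply Real.exp_le_exp.mpr
        have : -(-s) * x = s * x := by ring
        rw [this]
        linarith
      rw [Real.norm_eq_abs, abs_of_pos (hpos x)]
      exact this
    refine (hIcc.union hIoi).mono_set ?_
    intro x hx
    rcases le_or_gt x (max b 0) with h | h
    · exact Or.inl ⟨hx, h⟩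
    · exact Or.inr (lt_of_le_of_lt (le_max_left b 0) h)
  have key₂ : ∀ a b : ℝ, a < b → g b ≤ g a := by
    intro a b hab
    by_contra hlt
    push_neg at hlt
    set s : ℝ := (g b - g a) / (b - a) with hs
    have hspos : 0 < s := div_pos (by linarith) (by linarith)
    apply h₁
    have hIcc : IntegrableOn f (Set.Icc (min a 0) 0) := hcont.integrableOn_Icc
    have hIic : IntegrableOn f (Set.Iic a) := by
      have hdom : IntegrableOn
          (fun x => Real.exp (g a - s * a) * Real.exp (s * x)) (Set.Iic a) :=
        (exp_mul_integrableOn_Iic a hspos).const_mul _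
      apply hdom.mono' ((hcont.aestronglyMeasurable).restrict)
      filter_upwards [ae_restrict_mem measurableSet_Iic] with x hx
      have hxa : x ≤ a := hx
      have hgx : g x ≤ g a + s * (x - a) := by
        rcases eq_or_lt_of_le hxa with rfl | hxa'
        · simp
        · have hslope := hconc.slope_anti_adjacent (mem_univ x) (mem_univ b) hxa' hab
          -- (g b - g a) / (b - a) ≤ (g a - g x) / (a - x)
          have h' : s ≤ (g a - g x) / (a - x) := hslope
          have h'' : s * (a - x) ≤ g a - g x := by
            rw [le_div_iff₀ (by linarith)] at h'
            linarith
          nlinarith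
      have : f x ≤ Real.exp (g a - s * a) * Real.exp (s * x) := by
        rw [hfg x, ← Real.exp_add]
        apply Real.exp_le_exp.mpr
        linarith
      rw [Real.norm_eq_abs, abs_of_pos (hpos x)]
      exact this
    refine (hIcc.union hIic).mono_set ?_
    intro x hx
    rcases le_or_gt (min a 0) x with h | h
    · exact Or.inl ⟨h, hx⟩
    · exact Or.inr (le_of_lt (lt_of_lt_of_le h (min_le_left a 0)))
  have hgconst : ∀ x y : ℝ, g x = g y := by
    intro x y
    rcases lt_trichotomy x y with h | h | h
    · exact le_antisymm (key₁ x y h) (key₂ x y h)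
    · rw [h]
    · exact le_antisymm (key₂ y x h) (key₁ y x h)
  intro x y
  rw [hfg x, hfg y, hgconst x y]

/-- A continuous positive log-concave density on `ℝ` which is not
integrable on `(−∞,0]` nor on `[0,+∞)` is constant; consequently every bounded open
interval is an isoperimetric region of its own weighted volume. -/
theorem logconcave_both_ends_infinite_constant
    (f : ℝ → ℝ) (hcont : Continuous f) (hpos : ∀ x, 0 < f x)
    (hconc : ConcaveOn ℝ Set.univ (fun x => Real.log (f x)))
    (h₁ : ¬ IntegrableOn f (Set.Iic 0))
    (h₂ : ¬ IntegrableOn f (Set.Ici 0)) :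
    (∃ k : ℝ, ∀ x : ℝ, f x = k) ∧
    ∀ a b : ℝ, a < b → IsIsopRegion f (Set.Ioo a b) (wvol f (Set.Ioo a b)) := by
  have hk : ∀ x : ℝ, f x = f 0 := fun x =>
    aux_logconcave_const f hcont hpos hconc h₁ h₂ x 0
  set k : ℝ := f 0 with hkdef
  have hkpos : 0 < k := hpos 0
  have hvol : ∀ S : Set ℝ, wvol f S = ENNReal.ofReal k * volume S := by
    intro S
    unfold wvol
    simp only [hk]
    exact setLIntegral_const S _
  refine ⟨⟨k, hk⟩, ?_⟩
  intro a b hab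
  refine ⟨isOpen_Ioo, rfl, ?_⟩
  intro U hU hUvol
  -- upper bound for the perimeter of the interval
  have hper_ab : wper f (Set.Ioo a b) ≤ ENNReal.ofReal k + ENNReal.ofReal k := by
    unfold wper
    rw [frontier_Ioo hab]
    have h1 : ({a, b} : Set ℝ) = {a} ∪ {b} := rfl
    rw [h1]
    calc ∑' x : ↑(({a} : Set ℝ) ∪ {b}), ENNReal.ofReal (f ↑x)
        ≤ (∑' x : ({a} : Set ℝ), ENNReal.ofReal (f ↑x)) +
            ∑' x : ({b} : Set ℝ), ENNReal.ofReal (f ↑x) :=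
          ENNReal.tsum_union_le (fun y => ENNReal.ofReal (f y)) {a} {b}
      _ = ENNReal.ofReal k + ENNReal.ofReal k := by
          rw [tsum_singleton a (fun y => ENNReal.ofReal (f y)),
            tsum_singleton b (fun y => ENNReal.ofReal (f y)), hk a, hk b]
  -- facts about U
  have hkne : ENNReal.ofReal k ≠ 0 := (ENNReal.ofReal_pos.mpr hkpos).ne'
  have hUvol' : wvol f U = ENNReal.ofReal k * ENNReal.ofReal (b - a) := by
    rw [hUvol, hvol, Real.volume_Ioo]
  have hvpos : wvol f U ≠ 0 := by
    rw [hUvol']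
    exact mul_ne_zero hkne (ENNReal.ofReal_pos.mpr (sub_pos.mpr hab)).ne'
  have hvfin : wvol f U ≠ ⊤ := by
    rw [hUvol']
    exact ENNReal.mul_ne_top ENNReal.ofReal_ne_top ENNReal.ofReal_ne_top
  have hne : U.Nonempty := by
    rcases Set.eq_empty_or_nonempty U with h | h
    · exfalso; apply hvpos; rw [hvol, h]; simp
    · exact h
  have hrayIoi : ∀ p : ℝ, ¬ Set.Ioi p ⊆ U := by
    intro p hp
    apply hvfin
    rw [hvol]
    have h1 : volume U = ⊤ := by
      refine top_le_iff.mp ?_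
      calc (⊤ : ENNReal) = volume (Set.Ioi p) := Real.volume_Ioi.symm
        _ ≤ volume U := measure_mono hp
    rw [h1, ENNReal.mul_top hkne]
  have hrayIio : ∀ p : ℝ, ¬ Set.Iio p ⊆ U := by
    intro p hp
    apply hvfin
    rw [hvol]
    have h1 : volume U = ⊤ := by
      refine top_le_iff.mp ?_
      calc (⊤ : ENNReal) = volume (Set.Iio p) := Real.volume_Iio.symm
        _ ≤ volume U := measure_mono hp
    rw [h1, ENNReal.mul_top hkne]
  obtain ⟨x, hx⟩ := hne
  -- a frontier point to the right of x
  have hA : (Uᶜ ∩ Set.Ici x).Nonempty := by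
    rcases Set.eq_empty_or_nonempty (Uᶜ ∩ Set.Ici x) with h | h
    · exfalso
      apply hrayIoi x
      intro y hy
      by_contra hyU
      exact Set.eq_empty_iff_forall_notMem.mp h y ⟨hyU, (le_of_lt hy : x ≤ y)⟩
    · exact h
  have hclosedA : IsClosed (Uᶜ ∩ Set.Ici x) := (isClosed_compl_iff.mpr hU).inter isClosed_Ici
  have hbddA : BddBelow (Uᶜ ∩ Set.Ici x) := ⟨x, fun y hy => hy.2⟩
  set p := sInf (Uᶜ ∩ Set.Ici x) with hpdef
  have hpA : p ∈ Uᶜ ∩ Set.Ici x := hclosedA.csInf_mem hA hbddA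
  have hpU : p ∉ U := hpA.1
  have hxp : x < p := lt_of_le_of_ne hpA.2 (fun h => hpU (h ▸ hx))
  have hIco : Set.Ico x p ⊆ U := by
    intro y hy
    by_contra hyU
    exact absurd (csInf_le hbddA ⟨hyU, hy.1⟩) (not_le.mpr hy.2)
  have hpfr : p ∈ frontier U := by
    rw [hU.frontier_eq]
    refine ⟨?_, hpU⟩
    have h1 : p ∈ closure (Set.Ico x p) := by
      rw [closure_Ico hxp.ne]
      exact ⟨hxp.le, le_rfl⟩
    exact closure_mono hIco h1
  -- a frontier point to the left of x
  have hB : (Uᶜ ∩ Set.Iic x).Nonempty := by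
    rcases Set.eq_empty_or_nonempty (Uᶜ ∩ Set.Iic x) with h | h
    · exfalso
      apply hrayIio x
      intro y hy
      by_contra hyU
      exact Set.eq_empty_iff_forall_notMem.mp h y ⟨hyU, (le_of_lt hy : y ≤ x)⟩
    · exact h
  have hclosedB : IsClosed (Uᶜ ∩ Set.Iic x) := (isClosed_compl_iff.mpr hU).inter isClosed_Iic
  have hbddB : BddAbove (Uᶜ ∩ Set.Iic x) := ⟨x, fun y hy => hy.2⟩
  set q := sSup (Uᶜ ∩ Set.Iic x) with hqdef
  have hqB : q ∈ Uᶜ ∩ Set.Iic x := hclosedB.csSup_mem hB hbddB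
  have hqU : q ∉ U := hqB.1
  have hqx : q < x := lt_of_le_of_ne hqB.2 (fun h => hqU (h.symm ▸ hx))
  have hIoc : Set.Ioc q x ⊆ U := by
    intro y hy
    by_contra hyU
    exact absurd (le_csSup hbddB ⟨hyU, hy.2⟩) (not_le.mpr hy.1)
  have hqfr : q ∈ frontier U := by
    rw [hU.frontier_eq]
    refine ⟨?_, hqU⟩
    have h1 : q ∈ closure (Set.Ioc q x) := by
      rw [closure_Ioc hqx.ne]
      exact ⟨le_rfl, hqx.le⟩
    exact closure_mono hIoc h1
  have hqp : q ≠ p := (hqx.trans hxp).ne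
  -- lower bound for the perimeter of U
  have hper_U : ENNReal.ofReal k + ENNReal.ofReal k ≤ wper f U := by
    unfold wper
    have hsum := ENNReal.sum_le_tsum
      (f := fun y : frontier U => ENNReal.ofReal (f ↑y))
      ({⟨q, hqfr⟩, ⟨p, hpfr⟩} : Finset (frontier U))
    have hne' : (⟨q, hqfr⟩ : frontier U) ≠ ⟨p, hpfr⟩ := by
      simp [Subtype.mk_eq_mk, hqp]
    rw [Finset.sum_pair hne'] at hsum
    simpa [hk q, hk p] using hsum
  exact hper_ab.trans hper_U
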